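/- Let n be a natural number and let h₀ and h_C be two n-cycles in the symmetric group on Fin n. Then there exists a finite sequence s₁, s₂, …, s_r of permutations of Fin n, each of which is either a 3-cycle or a product of two disjoint transpositions, such that: (1) every partial product h₀ * s₁ * ⋯ * s_k (for 1 ≤ k ≤ r) is again an n-cycle; (2) at every step the number of points moved by (h₀ * s₁ * ⋯ * s_k)⁻¹ * h_C is at least two less than the number of points moved by (h₀ * s₁ * ⋯ * s_{k-1})⁻¹ * h_C; and (3) h₀ * s₁ * ⋯ * s_r = h_C. -/

import Mathlib

set_option linter.unusedSectionVars false
set_option maxHeartbeats 1000000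

section Stmt5Aux

open Equiv Equiv.Perm Finset

variable {α : Type*} [Fintype α] [DecidableEq α]

lemma perm_apply_inv_self (f : Equiv.Perm α) (x : α) : f (f⁻¹ x) = x :=
  (Equiv.eq_symm_apply f).mp rfl

lemma perm_inv_apply_self (f : Equiv.Perm α) (x : α) : f⁻¹ (f x) = x :=
  Equiv.Perm.inv_eq_iff_eq.mpr rfl

lemma fixed_sameCycle {g : Equiv.Perm α} {x y : α} (hx : g x = x) (h : g.SameCycle x y) :
    x = y := by
  obtain ⟨i, hi⟩ := h
  rwa [zpow_apply_eq_self_of_apply_eq_self hx] at hi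

lemma pow_mod_apply {g : Equiv.Perm α} {u : α} {k : ℕ} (hk : (g ^ k) u = u) (i : ℕ) :
    (g ^ i) u = (g ^ (i % k)) u := by
  by_cases h0 : k = 0
  · simp [h0]
  conv_lhs => rw [← Nat.div_add_mod i k]
  generalize i / k = q
  induction q with
  | zero => simp
  | succ q ih =>
    rw [Nat.mul_succ, add_right_comm, pow_add, Equiv.Perm.mul_apply, hk]; exact ih

lemma chainC (g : Equiv.Perm α) (u v : α) :
    ∀ k : ℕ, (∀ j, 1 ≤ j → j ≤ k → (g ^ j) u ≠ u ∧ (g ^ j) u ≠ v) →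
      (g * Equiv.swap u v).SameCycle v ((g ^ (k + 1)) u) := by
  intro k
  induction k with
  | zero =>
    intro _
    exact ⟨1, by simp [Equiv.Perm.mul_apply]⟩
  | succ k ih =>
    intro hj
    have h1 := ih fun j a b => hj j a (b.trans (Nat.le_succ k))
    refine h1.trans ⟨1, ?_⟩
    have h2 := hj (k + 1) (by omega) (by omega)
    have : (g * Equiv.swap u v) ((g ^ (k + 1)) u) = (g ^ (k + 2)) u := by
      rw [Equiv.Perm.mul_apply, Equiv.swap_apply_of_ne_of_ne h2.1 h2.2, ← Equiv.Perm.mul_apply,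
        ← pow_succ']
    simpa using this

lemma merge_half {g : Equiv.Perm α} {u v : α} (hne : ¬ g.SameCycle u v) :
    ∀ x, g.SameCycle u x → (g * Equiv.swap u v).SameCycle v x := by
  classical
  -- minimal return time
  have hex : ∃ j, 0 < j ∧ ((g ^ j) u = u ∨ (g ^ j) u = v) := by
    refine ⟨orderOf g, orderOf_pos g, Or.inl ?_⟩
    rw [pow_orderOf_eq_one]; rfl
  set k := Nat.find hex with hkdef
  obtain ⟨hkpos, hkret⟩ := Nat.find_spec hex
  rw [← hkdef] at hkpos hkret
  have hku : (g ^ k) u = u := by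
    rcases hkret with h | h
    · exact h
    · exact absurd ⟨(k : ℤ), by rw [zpow_natCast]; exact h⟩ hne
  have hmin : ∀ j, 1 ≤ j → j < k → (g ^ j) u ≠ u ∧ (g ^ j) u ≠ v := by
    intro j h1 h2
    have h3 := Nat.find_min hex (show j < Nat.find hex from hkdef ▸ h2)
    push_neg at h3
    exact h3 h1
  clear_value k
  clear hkdef hkret
  have key : (g * Equiv.swap u v).SameCycle v u := by
    rcases Nat.lt_or_ge k 2 with hk2 | hk2
    · -- k = 1 : g u = u
      interval_cases k
      exact ⟨1, by simpa [Equiv.Perm.mul_apply] using hku⟩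
    · obtain ⟨m, rfl⟩ : ∃ m, k = m + 2 := ⟨k - 2, by omega⟩
      have h1 := chainC g u v m (fun j a b => hmin j a (by omega))
      refine h1.trans ⟨1, ?_⟩
      have h2 := hmin (m + 1) (by omega) (by omega)
      calc ((g * Equiv.swap u v) ^ (1:ℤ)) ((g ^ (m + 1)) u)
          = g (Equiv.swap u v ((g ^ (m + 1)) u)) := by simp [Equiv.Perm.mul_apply]
        _ = (g ^ (m + 2)) u := by
            rw [Equiv.swap_apply_of_ne_of_ne h2.1 h2.2, ← Equiv.Perm.mul_apply, ← pow_succ']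
        _ = u := hku
  intro x hx
  obtain ⟨i, -, hi⟩ := hx.exists_pow_eq'
  have hir : (g ^ (i % k)) u = x := by rw [← pow_mod_apply hku i, hi]
  rcases Nat.eq_zero_or_pos (i % k) with h0 | h0
  · rw [h0] at hir; simp at hir
    exact key.trans (hir ▸ Equiv.Perm.SameCycle.refl _ _)
  · obtain ⟨m, hm⟩ : ∃ m, i % k = m + 1 := ⟨i % k - 1, by omega⟩
    have hlt : i % k < k := Nat.mod_lt _ hkpos
    have h1 := chainC g u v m (fun j a b => hmin j a (by omega))
    rw [← hm, hir] at h1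
    exact h1

lemma mergeC {g : Equiv.Perm α} {u v : α} (hne : ¬ g.SameCycle u v) :
    ∀ x, (g.SameCycle u x ∨ g.SameCycle v x) → (g * Equiv.swap u v).SameCycle u x := by
  have key : (g * Equiv.swap u v).SameCycle v u :=
    merge_half hne u (Equiv.Perm.SameCycle.refl _ _)
  intro x hx
  rcases hx with hx | hx
  · exact key.symm.trans (merge_half hne x hx)
  · have hne' : ¬ g.SameCycle v u := fun h => hne h.symm
    have := merge_half hne' x hx
    rwa [Equiv.swap_comm] at this

lemma split_cover {h : Equiv.Perm α} {a : α} (d : α) (htrans : ∀ x, h.SameCycle a x) (x : α) :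
    (h * Equiv.swap a d).SameCycle a x ∨ (h * Equiv.swap a d).SameCycle d x := by
  obtain ⟨i, -, rfl⟩ := (htrans x).exists_pow_eq'
  set g := h * Equiv.swap a d with hg
  have hga : g a = h d := by simp [hg, Equiv.Perm.mul_apply]
  have hgd : g d = h a := by simp [hg, Equiv.Perm.mul_apply]
  induction i with
  | zero => left; simpa using Equiv.Perm.SameCycle.refl _ _
  | succ i ih =>
    have hstep : (h ^ (i + 1)) a = h ((h ^ i) a) := by
      rw [pow_succ', Equiv.Perm.mul_apply]
    by_cases hya : (h ^ i) a = a
    · right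
      rw [hstep, hya, ← hgd]
      exact ⟨1, by simp⟩
    · by_cases hyd : (h ^ i) a = d
      · left
        rw [hstep, hyd, ← hga]
        exact ⟨1, by simp⟩
      · have hgy : g ((h ^ i) a) = (h ^ (i + 1)) a := by
          rw [hg, Equiv.Perm.mul_apply, Equiv.swap_apply_of_ne_of_ne hya hyd, hstep]
        rcases ih with h1 | h1
        · exact Or.inl (h1.trans ⟨1, by simpa using hgy⟩)
        · exact Or.inr (h1.trans ⟨1, by simpa using hgy⟩)

lemma split_not {h : Equiv.Perm α} {a d : α} (hcyc : h.IsCycle)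
    (hsupp : h.support = Finset.univ) (had : a ≠ d) :
    ¬ (h * Equiv.swap a d).SameCycle a d := by
  intro hsc
  set g := h * Equiv.swap a d with hg
  have hmove : ∀ x, h x ≠ x := fun x => mem_support.1 (hsupp ▸ mem_univ x)
  have htrans : ∀ x, h.SameCycle a x := fun x => hcyc.sameCycle (hmove a) (hmove x)
  have hAll : ∀ x, g.SameCycle a x := fun x =>
    (split_cover d htrans x).elim id fun hx => hsc.trans hx
  have hga : g a ≠ a := fun hfix => had (fixed_sameCycle hfix hsc)
  have hmoves : ∀ x, g x ≠ x := by
    intro x hfix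
    have hxa : x = a := fixed_sameCycle hfix (hAll x).symm
    exact hga (hxa ▸ hfix)
  have gcyc : g.IsCycle := ⟨a, hmoves a, fun y _ => hAll y⟩
  have gsupp : g.support = Finset.univ :=
    Finset.eq_univ_iff_forall.2 fun x => mem_support.2 (hmoves x)
  have s1 := hcyc.sign
  have s2 := gcyc.sign
  rw [hsupp] at s1
  rw [gsupp] at s2
  have hsg : Equiv.Perm.sign g = Equiv.Perm.sign h * Equiv.Perm.sign (Equiv.swap a d) := by
    rw [hg, map_mul]
  rw [Equiv.Perm.sign_swap had, s1, s2] at hsg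
  have : (-1 : ℤˣ) = 1 := by
    nth_rewrite 1 [← mul_one (-(-1) ^ #(univ : Finset α) : ℤˣ)] at hsg
    exact (mul_left_cancel hsg).symm
  simp at this

lemma cross_exists {g hC : Equiv.Perm α} (hCtrans : ∀ x y, hC.SameCycle x y)
    {a d : α} (hnsc : ¬ g.SameCycle a d) :
    ∃ u, ¬ g.SameCycle u (g⁻¹ (hC u)) := by
  by_contra hall
  push_neg at hall
  have hT : ∀ x, g.SameCycle a x → g.SameCycle a (hC x) := by
    intro x hx
    refine (hx.trans (hall x)).trans ⟨1, by simp⟩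
  have hiter : ∀ i : ℕ, g.SameCycle a ((hC ^ i) a) := by
    intro i
    induction i with
    | zero => simpa using Equiv.Perm.SameCycle.refl _ _
    | succ i ih =>
      have : (hC ^ (i + 1)) a = hC ((hC ^ i) a) := by rw [pow_succ', Equiv.Perm.mul_apply]
      rw [this]
      exact hT _ ih
  obtain ⟨i, -, hi⟩ := (hCtrans a d).exists_pow_eq'
  exact hnsc (hi ▸ hiter i)

lemma step_lemma {h hC : Equiv.Perm α} (hcyc : h.IsCycle) (hsupp : h.support = Finset.univ)
    (hCcyc : hC.IsCycle) (hCsupp : hC.support = Finset.univ) (hne : h ≠ hC) :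
    ∃ s : Equiv.Perm α,
      (s.IsThreeCycle ∨ ∃ a b c d : α, a ≠ b ∧ c ≠ d ∧ a ≠ c ∧ a ≠ d ∧ b ≠ c ∧ b ≠ d ∧
        s = Equiv.swap a b * Equiv.swap c d) ∧
      (h * s).IsCycle ∧ (h * s).support = Finset.univ ∧
      ((h * s)⁻¹ * hC).support.card + 2 ≤ (h⁻¹ * hC).support.card := by
  classical
  have hmove : ∀ x, h x ≠ x := fun x => mem_support.1 (hsupp ▸ mem_univ x)
  have hCmove : ∀ x, hC x ≠ x := fun x => mem_support.1 (hCsupp ▸ mem_univ x)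
  have htrans : ∀ x y, h.SameCycle x y := fun x y => hcyc.sameCycle (hmove x) (hmove y)
  have hCtrans : ∀ x y, hC.SameCycle x y := fun x y => hCcyc.sameCycle (hCmove x) (hCmove y)
  set σ : Equiv.Perm α := h⁻¹ * hC with hσ
  have hσapp : ∀ x, σ x = h⁻¹ (hC x) := fun x => rfl
  -- find a disagreement point
  have hone : ∃ a, σ a ≠ a := by
    by_contra hex
    push_neg at hex
    apply hne
    have h1 : σ = 1 := Equiv.ext fun x => hex x
    rw [hσ] at h1
    exact inv_mul_eq_one.mp h1
  obtain ⟨a, ha⟩ := hone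
  set d : α := σ a with hd
  have had : a ≠ d := fun e => ha e.symm
  have hhd : h d = hC a := by rw [hd, hσapp, perm_apply_inv_self]
  have hσd : σ d ≠ d := by
    intro e
    rw [hσapp] at e
    have h1 := congrArg h e
    rw [perm_apply_inv_self, hhd] at h1
    exact had (hC.injective h1).symm
  set g : Equiv.Perm α := h * Equiv.swap a d with hg
  have hga : g a = hC a := by
    rw [hg, Equiv.Perm.mul_apply, Equiv.swap_apply_left, hhd]
  have hgd : g d = h a := by rw [hg, Equiv.Perm.mul_apply, Equiv.swap_apply_right]
  have hginv : ∀ x, g⁻¹ x = Equiv.swap a d (h⁻¹ x) := by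
    intro x
    rw [hg, mul_inv_rev, Equiv.Perm.mul_apply, Equiv.swap_inv]
  have hnsc : ¬ g.SameCycle a d := split_not hcyc hsupp had
  have hcover : ∀ x, g.SameCycle a x ∨ g.SameCycle d x :=
    fun x => split_cover d (htrans a) x
  obtain ⟨u, hu⟩ := cross_exists hCtrans hnsc
  set v : α := g⁻¹ (hC u) with hv
  have hvσ : v = Equiv.swap a d (σ u) := by rw [hv, hginv, hσapp]
  have huv : u ≠ v := fun e => hu (e ▸ Equiv.Perm.SameCycle.refl g u)
  have hfa : g⁻¹ (hC a) = a := by rw [← hga, perm_inv_apply_self]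
  have hua : u ≠ a := by
    intro e
    apply hu
    rw [hv, e, hfa]
  have hva : v ≠ a := by
    intro e
    rw [hv] at e
    have : hC u = g a := by rw [← e, perm_apply_inv_self]
    rw [hga] at this
    exact hua (hC.injective this)
  have hσu : σ u ≠ u := by
    intro e
    by_cases hud : u = d
    · rw [hud] at e
      exact hσd e
    · apply huv
      rw [hvσ, e, Equiv.swap_apply_of_ne_of_ne hua hud]
  have hσv : σ v ≠ v := by
    intro e
    by_cases hvd : v = d
    · exact hσd (hvd ▸ e)
    · -- g⁻¹ (hC v) = v = g⁻¹ (hC u), so u = v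
      apply huv
      have h1 : Equiv.swap a d (σ v) = v := by
        rw [e, Equiv.swap_apply_of_ne_of_ne hva hvd]
      have h2 : Equiv.swap a d (σ v) = Equiv.swap a d (σ u) := by rw [h1, hvσ]
      have := σ.injective ((Equiv.swap a d).injective h2)
      exact this.symm
  -- classes of u and v
  have hclass : ∀ y, g.SameCycle u y ∨ g.SameCycle v y := by
    rcases hcover u with h1 | h1 <;> rcases hcover v with h2 | h2
    · exact absurd (h1.symm.trans h2) hu
    · intro y
      rcases hcover y with h3 | h3
      · exact Or.inl (h1.symm.trans h3)
      · exact Or.inr (h2.symm.trans h3)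
    · intro y
      rcases hcover y with h3 | h3
      · exact Or.inr (h2.symm.trans h3)
      · exact Or.inl (h1.symm.trans h3)
    · exact absurd (h1.symm.trans h2) hu
  have hall : ∀ y, (g * Equiv.swap u v).SameCycle u y := fun y => mergeC hu y (hclass y)
  set g'' : Equiv.Perm α := g * Equiv.swap u v with hg''
  have hfix : ∀ x, g'' x ≠ x := by
    intro x hfx
    by_cases hxu : x = u
    · rw [hxu] at hfx
      have h1 : g v = u := by rwa [hg'', Equiv.Perm.mul_apply, Equiv.swap_apply_left] at hfx
      exact hu (Equiv.Perm.SameCycle.symm ⟨1, by simpa using h1⟩)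
    · by_cases hxv : x = v
      · rw [hxv] at hfx
        have h1 : g u = v := by rwa [hg'', Equiv.Perm.mul_apply, Equiv.swap_apply_right] at hfx
        exact hu ⟨1, by simpa using h1⟩
      · have : g x = x := by
          rwa [hg'', Equiv.Perm.mul_apply, Equiv.swap_apply_of_ne_of_ne hxu hxv] at hfx
        rcases hclass x with h1 | h1
        · exact hxu (fixed_sameCycle this h1.symm)
        · exact hxv (fixed_sameCycle this h1.symm)
  have hcyc'' : g''.IsCycle := ⟨u, hfix u, fun y _ => hall y⟩
  have hsupp'' : g''.support = Finset.univ :=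
    Finset.eq_univ_iff_forall.2 fun x => mem_support.2 (hfix x)
  refine ⟨Equiv.swap a d * Equiv.swap u v, ?_, ?_, ?_, ?_⟩
  · -- goodness
    by_cases hdu : d = u
    · left
      rw [Equiv.swap_comm a d, hdu]
      exact isThreeCycle_swap_mul_swap_same hua huv (fun e => hva e.symm)
    · by_cases hdv : d = v
      · left
        rw [Equiv.swap_comm a d, Equiv.swap_comm u v, hdv]
        exact isThreeCycle_swap_mul_swap_same hva (fun e => huv e.symm) (fun e => hua e.symm)
      · right
        exact ⟨a, d, u, v, had, huv, fun e => hua e.symm, fun e => hva e.symm, hdu, hdv, rfl⟩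
  · rw [← mul_assoc]; exact hcyc''
  · rw [← mul_assoc]; exact hsupp''
  · -- counting
    have hσ' : (h * (Equiv.swap a d * Equiv.swap u v))⁻¹ * hC
        = (Equiv.swap a d * Equiv.swap u v)⁻¹ * σ := by
      rw [hσ, mul_inv_rev, mul_assoc]
    rw [hσ']
    set s : Equiv.Perm α := Equiv.swap a d * Equiv.swap u v with hs
    have hsa : s a = σ a := by
      rw [hs, Equiv.Perm.mul_apply, Equiv.swap_apply_of_ne_of_ne hua.symm hva.symm,
        Equiv.swap_apply_left, hd]
    have hsu : s u = σ u := by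
      rw [hs, Equiv.Perm.mul_apply, Equiv.swap_apply_left, hvσ, Equiv.swap_apply_self]
    have hsubD : ∀ x, s x ≠ x → σ x ≠ x := by
      intro x hsx
      have hxmem : x ∈ s.support := mem_support.2 hsx
      have : s.support ⊆ {a, d} ∪ {u, v} := by
        refine (support_mul_le _ _).trans ?_
        rw [Equiv.Perm.support_swap had, Equiv.Perm.support_swap huv]
        exact le_rfl
      have hx4 := this hxmem
      simp only [mem_union, mem_insert, mem_singleton] at hx4
      rcases hx4 with (rfl | rfl) | (rfl | rfl)
      · exact ha
      · exact hσd
      · exact hσu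
      · exact hσv
    have hsubset : (s⁻¹ * σ).support ⊆ σ.support \ {a, u} := by
      intro x hx
      have hne' : σ x ≠ s x := by
        intro e
        apply mem_support.1 hx
        rw [Equiv.Perm.mul_apply, e, perm_inv_apply_self]
      rw [mem_sdiff, mem_support]
      refine ⟨?_, ?_⟩
      · intro e
        by_cases hsx : s x = x
        · exact hne' (e.trans hsx.symm)
        · exact hsubD x hsx e
      · simp only [mem_insert, mem_singleton]
        rintro (rfl | rfl)
        · exact hne' hsa.symm
        · exact hne' hsu.symm
    have hau : ({a, u} : Finset α) ⊆ σ.support := by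
      intro x hx
      simp only [mem_insert, mem_singleton] at hx
      rcases hx with rfl | rfl
      · exact mem_support.2 ha
      · exact mem_support.2 hσu
    have hcard2 : ({a, u} : Finset α).card = 2 := by
      rw [card_insert_of_notMem (by simp only [mem_singleton]; exact fun e => hua e.symm),
        card_singleton]
    have h1 := card_le_card hsubset
    rw [card_sdiff_of_subset hau] at h1
    have h2 := card_le_card hau
    rw [hcard2] at h1 h2
    omega

lemma prod_shift (s₀ : Equiv.Perm α) (s : ℕ → Equiv.Perm α) (k : ℕ) :
    ((List.range (k + 1)).map (fun i => if i = 0 then s₀ else s (i - 1))).prod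
      = s₀ * ((List.range k).map s).prod := by
  rw [List.range_succ_eq_map, List.map_cons, List.map_map, List.prod_cons, if_pos rfl]
  have h1 : ((fun i => if i = 0 then s₀ else s (i - 1)) ∘ Nat.succ) = s := by
    funext i; simp
  rw [h1]

lemma main_ind (m : ℕ) : ∀ h hC : Equiv.Perm α, h.IsCycle → h.support = Finset.univ →
    hC.IsCycle → hC.support = Finset.univ → (h⁻¹ * hC).support.card ≤ m →
    ∃ (r : ℕ) (s : ℕ → Equiv.Perm α),
      (∀ k < r, (s k).IsThreeCycle ∨
        ∃ a b c d : α, a ≠ b ∧ c ≠ d ∧ a ≠ c ∧ a ≠ d ∧ b ≠ c ∧ b ≠ d ∧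
          s k = Equiv.swap a b * Equiv.swap c d) ∧
      (∀ k, 1 ≤ k → k ≤ r →
        (h * ((List.range k).map s).prod).IsCycle ∧
          (h * ((List.range k).map s).prod).support = Finset.univ) ∧
      (∀ k, 1 ≤ k → k ≤ r →
        ((h * ((List.range k).map s).prod)⁻¹ * hC).support.card + 2 ≤
          ((h * ((List.range (k - 1)).map s).prod)⁻¹ * hC).support.card) ∧
      h * ((List.range r).map s).prod = hC := by
  induction m with
  | zero =>
    intro h hC hcyc hsupp hCcyc hCsupp hcard
    have h1 : (h⁻¹ * hC).support = ∅ := Finset.card_eq_zero.mp (Nat.le_zero.mp hcard)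
    have h2 : h = hC := inv_mul_eq_one.mp (Equiv.Perm.support_eq_empty_iff.mp h1)
    exact ⟨0, fun _ => 1, fun k hk => absurd hk (Nat.not_lt_zero k),
      fun k hk hk' => absurd (hk.trans hk') (by omega), fun k hk hk' => absurd (hk.trans hk') (by omega),
      by simpa using h2⟩
  | succ m ih =>
    intro h hC hcyc hsupp hCcyc hCsupp hcard
    by_cases heq : h = hC
    · exact ⟨0, fun _ => 1, fun k hk => absurd hk (Nat.not_lt_zero k),
        fun k hk hk' => absurd (hk.trans hk') (by omega),
        fun k hk hk' => absurd (hk.trans hk') (by omega), by simpa using heq⟩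
    obtain ⟨s₀, hgood₀, hcyc', hsupp', hdrop₀⟩ := step_lemma hcyc hsupp hCcyc hCsupp heq
    obtain ⟨r, s, hG, hP, hD, hF⟩ := ih (h * s₀) hC hcyc' hsupp' hCcyc hCsupp (by omega)
    refine ⟨r + 1, fun i => if i = 0 then s₀ else s (i - 1), ?_, ?_, ?_, ?_⟩
    · intro k hk
      rcases Nat.eq_zero_or_pos k with rfl | hk0
      · simpa using hgood₀
      · obtain ⟨j, rfl⟩ : ∃ j, k = j + 1 := ⟨k - 1, by omega⟩
        simpa using hG j (by omega)
    · intro k hk1 hkr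
      obtain ⟨j, rfl⟩ : ∃ j, k = j + 1 := ⟨k - 1, by omega⟩
      rw [prod_shift, ← mul_assoc]
      rcases Nat.eq_zero_or_pos j with rfl | hj0
      · simpa using ⟨hcyc', hsupp'⟩
      · exact hP j hj0 (by omega)
    · intro k hk1 hkr
      obtain ⟨j, rfl⟩ : ∃ j, k = j + 1 := ⟨k - 1, by omega⟩
      simp only [Nat.add_sub_cancel]
      rw [prod_shift, ← mul_assoc]
      rcases Nat.eq_zero_or_pos j with rfl | hj0
      · simpa using hdrop₀
      · obtain ⟨i, rfl⟩ : ∃ i, j = i + 1 := ⟨j - 1, by omega⟩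
        rw [prod_shift, ← mul_assoc]
        have := hD (i + 1) (by omega) (by omega)
        simpa using this
    · rw [prod_shift, ← mul_assoc]
      exact hF

end Stmt5Aux

/-- Theorem 1.10 (group-theoretic content): given two `n`-cycles `h₀` and `hC`
on `Fin n`, there is a finite sequence `s 0, …, s (r-1)` of permutations, each a
3-cycle or a product of two disjoint transpositions, such that every partial
product `h₀ * s 0 * ⋯ * s (k-1)` is again an `n`-cycle, at each step the number
of points moved by `(partial product)⁻¹ * hC` drops by at least two, and the
full product equals `hC`. -/
theorem stmt_5 (n : ℕ) (h₀ hC : Equiv.Perm (Fin n))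
    (h₀cyc : h₀.IsCycle) (h₀supp : h₀.support = Finset.univ)
    (hCcyc : hC.IsCycle) (hCsupp : hC.support = Finset.univ) :
    ∃ (r : ℕ) (s : ℕ → Equiv.Perm (Fin n)),
      (∀ k < r, (s k).IsThreeCycle ∨
        ∃ a b c d : Fin n, a ≠ b ∧ c ≠ d ∧ a ≠ c ∧ a ≠ d ∧ b ≠ c ∧ b ≠ d ∧
          s k = Equiv.swap a b * Equiv.swap c d) ∧
      (∀ k, 1 ≤ k → k ≤ r →
        (h₀ * ((List.range k).map s).prod).IsCycle ∧
          (h₀ * ((List.range k).map s).prod).support = Finset.univ) ∧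
      (∀ k, 1 ≤ k → k ≤ r →
        ((h₀ * ((List.range k).map s).prod)⁻¹ * hC).support.card + 2 ≤
          ((h₀ * ((List.range (k - 1)).map s).prod)⁻¹ * hC).support.card) ∧
      h₀ * ((List.range r).map s).prod = hC := by
  exact main_ind ((h₀⁻¹ * hC).support.card) h₀ hC h₀cyc h₀supp hCcyc hCsupp le_rfl
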